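/- The group Sym_{M,n,r}(k) with operation L ⊕ N = L + N - 2(NML) + 2(LMN) is a central extension: the set of elements of Sym_{M,n,r}(k) whose off-diagonal blocks vanish (i.e. only the bottom-right r×r symmetric block L₂ is nonzero) forms a central subgroup isomorphic to (Sym_r(k), +), and the quotient by this subgroup is isomorphic to the additive group of (n-r)×r matrices over k. -/
import Mathlib

/-- The group `Sym_{M,n,r}(k)` in block coordinates `(L₁, L₂)`:
`(L₁,L₂) ⊕ (N₁,N₂) = (L₁+N₁, L₂+N₂-2N₁ᵀM'L₁+2L₁ᵀM'N₁)`. -/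
def blockOplus {k : Type*} [Field k] {m r : ℕ} (M' : Matrix (Fin m) (Fin m) k)
    (x y : Matrix (Fin m) (Fin r) k × Matrix (Fin r) (Fin r) k) :
    Matrix (Fin m) (Fin r) k × Matrix (Fin r) (Fin r) k :=
  (x.1 + y.1,
    x.2 + y.2 - (2 : k) • (y.1.transpose * M' * x.1) + (2 : k) • (x.1.transpose * M' * y.1))

/-- `Sym_{M,n,r}(k)` is a central extension: the elements with vanishing
off-diagonal blocks form a central subgroup isomorphic to `(Sym_r(k), +)`, and the
quotient by this subgroup is isomorphic to the additive group `M_{(n-r)×r}(k)`. -/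
theorem statement2 {k : Type*} [Field k] (hchar : (2 : k) ≠ 0) (m r : ℕ)
    (M' : Matrix (Fin m) (Fin m) k) (hskew : M'.transpose = -M') :
    -- the subgroup of elements `(0, S)` is central
    (∀ S : Matrix (Fin r) (Fin r) k, S.transpose = S →
      ∀ x : Matrix (Fin m) (Fin r) k × Matrix (Fin r) (Fin r) k,
        blockOplus M' (0, S) x = blockOplus M' x (0, S)) ∧
    -- `S ↦ (0, S)` is an injective group homomorphism from `(Sym_r(k), +)`
    (∀ S S' : Matrix (Fin r) (Fin r) k, S.transpose = S → S'.transpose = S' →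
      blockOplus M' (0, S) (0, S') = (0, S + S')) ∧
    (∀ S S' : Matrix (Fin r) (Fin r) k,
      ((0, S) : Matrix (Fin m) (Fin r) k × Matrix (Fin r) (Fin r) k) = (0, S') → S = S') ∧
    -- the first projection is a surjective group homomorphism onto `(M_{(n-r)×r}(k), +)`
    (∀ x y : Matrix (Fin m) (Fin r) k × Matrix (Fin r) (Fin r) k,
      (blockOplus M' x y).1 = x.1 + y.1) ∧
    (∀ L₁ : Matrix (Fin m) (Fin r) k,
      ∃ x : Matrix (Fin m) (Fin r) k × Matrix (Fin r) (Fin r) k, x.2.transpose = x.2 ∧ x.1 = L₁) ∧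
    -- its kernel is exactly the central subgroup above
    (∀ x : Matrix (Fin m) (Fin r) k × Matrix (Fin r) (Fin r) k,
      x.1 = 0 ↔ ∃ S : Matrix (Fin r) (Fin r) k, x = (0, S)) := by
  refine ⟨?_, ?_, ?_, ?_, ?_, ?_⟩
  · intro S _ x
    simp [blockOplus, Matrix.mul_zero, Matrix.zero_mul, add_comm]
  · intro S S' _ _
    simp [blockOplus]
  · intro S S' h
    exact (Prod.mk.injEq _ _ _ _ ▸ h).2
  · intro x y; rfl
  · intro L₁; exact ⟨(L₁, 0), by simp, rfl⟩
  · intro x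
    constructor
    · intro h; exact ⟨x.2, by rw [Prod.ext_iff]; simp [h]⟩
    · rintro ⟨S, rfl⟩; rfl
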